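/- Let ρ̄₀, ρ̄₁ ∈ M₊(Ω), ρ ∈ M₊([0,1]×Ω) and m ∈ M([0,1]×Ω;ℝ^d) with (ρ,m) ∈ CE(ρ̄₀,ρ̄₁). Then ρ̄₀(Ω) = ρ̄₁(Ω), and the pushforward of ρ under the projection (t,x) ↦ t equals ρ̄₀(Ω) times the Lebesgue measure on [0,1]. -/

import Mathlib

open MeasureTheory Set Filter Topology
open scoped ENNReal NNReal

noncomputable section

abbrev Euc (d : ℕ) : Type := EuclideanSpace ℝ (Fin d)

/-- Integral of a function against a finite signed measure. -/
def sInt {X : Type*} [MeasurableSpace X] (ν : SignedMeasure X) (f : X → ℝ) : ℝ :=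
  (∫ x, f x ∂ν.toJordanDecomposition.posPart) - ∫ x, f x ∂ν.toJordanDecomposition.negPart

/-- Total variation norm of a finite signed measure. -/
def sTV {X : Type*} [MeasurableSpace X] (ν : SignedMeasure X) : ℝ :=
  (ν.totalVariation Set.univ).toReal

/-- Pairing of an `ℝ^d`-valued measure (given componentwise) with a vector field. -/
def vInt {X : Type*} [MeasurableSpace X] {d : ℕ} (m : Fin d → SignedMeasure X)
    (b : X → Euc d) : ℝ :=
  ∑ i, sInt (m i) fun x => b x i

/-- Total variation norm of a vector measure, via duality with continuous fields. -/
def vTV {X : Type*} [MeasurableSpace X] [TopologicalSpace X] {d : ℕ}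
    (m : Fin d → SignedMeasure X) : ℝ :=
  ⨆ b : {b : C(X, Euc d) // ∀ x, ‖b x‖ ≤ 1}, vInt m fun x => (b : C(X, Euc d)) x

/-- The Benamou-Brenier action. -/
def actionBB {X : Type*} [MeasurableSpace X] [TopologicalSpace X] {d : ℕ}
    (ρ : SignedMeasure X) (m : Fin d → SignedMeasure X) : ℝ≥0∞ :=
  ⨆ p : {q : C(X, ℝ) × C(X, Euc d) // ∀ x, q.1 x + ‖q.2 x‖ ^ 2 / 2 ≤ 0},
    ENNReal.ofReal (sInt ρ (p : C(X, ℝ) × C(X, Euc d)).1 + vInt m (p : C(X, ℝ) × C(X, Euc d)).2)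

/-- The space-time domain `[0,1] × Ω`. -/
abbrev STt (d : ℕ) (Ω : Set (Euc d)) : Type := ↥(Icc (0:ℝ) 1) × ↥Ω

def STemb {d : ℕ} {Ω : Set (Euc d)} (p : STt d Ω) : ℝ × Euc d := ((p.1 : ℝ), (p.2 : Euc d))

/-- The (weak formulation of the) continuity equation with temporal boundary data `ρ₀, ρ₁`. -/
def CEeq (d : ℕ) (Ω : Set (Euc d)) (ρ₀ ρ₁ : SignedMeasure ↥Ω)
    (ρ : SignedMeasure (STt d Ω)) (m : Fin d → SignedMeasure (STt d Ω)) : Prop :=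
  ∀ φ : ℝ × Euc d → ℝ, ContDiff ℝ 1 φ →
    sInt ρ (fun p => fderiv ℝ φ (STemb p) (1, 0)) +
      ∑ i, sInt (m i) (fun p => fderiv ℝ φ (STemb p) (0, EuclideanSpace.single i 1)) =
    sInt ρ₁ (fun x => φ (1, (x : Euc d))) - sInt ρ₀ (fun x => φ (0, (x : Euc d)))

open scoped Classical in
/-- The functional `J_{ρ₀,ρ₁}`. -/
def Jfun (d : ℕ) (Ω : Set (Euc d)) (ρ₀ ρ₁ : SignedMeasure ↥Ω)
    (ρ : SignedMeasure (STt d Ω)) (m : Fin d → SignedMeasure (STt d Ω)) : ℝ≥0∞ :=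
  if CEeq d Ω ρ₀ ρ₁ ρ m then actionBB ρ m else ⊤

/-- The quadratic Wasserstein distance. -/
def W2 {d : ℕ} {Ω : Set (Euc d)} (μ ν : Measure ↥Ω) : ℝ :=
  Real.sqrt (sInf {c : ℝ | ∃ π : Measure (↥Ω × ↥Ω), IsFiniteMeasure π ∧
    π.map Prod.fst = μ ∧ π.map Prod.snd = ν ∧
    c = ∫ p, ‖(p.1 : Euc d) - (p.2 : Euc d)‖ ^ 2 ∂π})


section Aux

lemma jd_toSigned {X : Type*} [MeasurableSpace X] (μ : Measure X) [IsFiniteMeasure μ] :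
    μ.toSignedMeasure.toJordanDecomposition
      = ⟨μ, 0, MeasureTheory.Measure.MutuallySingular.zero_right⟩ := by
  set j : JordanDecomposition X := ⟨μ, 0, MeasureTheory.Measure.MutuallySingular.zero_right⟩
  have : μ.toSignedMeasure = j.toSignedMeasure := by
    simp [MeasureTheory.JordanDecomposition.toSignedMeasure, j]
  rw [this, MeasureTheory.JordanDecomposition.toJordanDecomposition_toSignedMeasure]

lemma sInt_toSigned {X : Type*} [MeasurableSpace X] (μ : Measure X) [IsFiniteMeasure μ]
    (f : X → ℝ) : sInt μ.toSignedMeasure f = ∫ x, f x ∂μ := by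
  rw [sInt, jd_toSigned]
  simp

lemma sInt_zero_fun {X : Type*} [MeasurableSpace X] (ν : SignedMeasure X) :
    sInt ν (fun _ => (0:ℝ)) = 0 := by
  simp [sInt]

lemma fderiv_comp_fst {d : ℕ} (f : ℝ → ℝ) (hf : ContDiff ℝ 1 f) (p : ℝ × Euc d) (a : ℝ)
    (v : Euc d) :
    fderiv ℝ (fun q : ℝ × Euc d => f q.1) p (a, v) = a * deriv f p.1 := by
  have h1 : HasFDerivAt (fun q : ℝ × Euc d => f q.1)
      (((1 : ℝ →L[ℝ] ℝ).smulRight (deriv f p.1)).comp (ContinuousLinearMap.fst ℝ ℝ (Euc d))) p :=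
    ((hf.differentiable one_ne_zero p.1).hasDerivAt.hasFDerivAt).comp p (hasFDerivAt_fst)
  rw [h1.fderiv]
  simp [mul_comm]

lemma antideriv_C1 (g : ℝ → ℝ) (hg : Continuous g) :
    ContDiff ℝ 1 (fun t => ∫ x in (0:ℝ)..t, g x) ∧
      deriv (fun t => ∫ x in (0:ℝ)..t, g x) = g := by
  have hd : ∀ t : ℝ, HasDerivAt (fun t => ∫ x in (0:ℝ)..t, g x) (g t) t := fun t =>
    (hg.integral_hasStrictDerivAt 0 t).hasDerivAt
  have hderiv : deriv (fun t => ∫ x in (0:ℝ)..t, g x) = g := funext fun t => (hd t).deriv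
  refine ⟨?_, hderiv⟩
  rw [contDiff_one_iff_deriv]
  refine ⟨fun t => (hd t).differentiableAt, by rw [hderiv]; exact hg⟩

lemma ext_real {Ω : Type*} [MeasurableSpace Ω] [MetricSpace Ω] [CompactSpace Ω] [BorelSpace Ω]
    (μ ν : Measure Ω) [IsFiniteMeasure μ] [IsFiniteMeasure ν]
    (h : ∀ g : Ω → ℝ, Continuous g → ∫ x, g x ∂μ = ∫ x, g x ∂ν) : μ = ν := by
  apply ext_of_forall_lintegral_eq_of_IsFiniteMeasure
  intro f
  have hg : Continuous fun x => (f x : ℝ) := NNReal.continuous_coe.comp f.continuous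
  have hcs : HasCompactSupport fun x => (f x : ℝ) :=
    IsCompact.of_isClosed_subset isCompact_univ (isClosed_tsupport _) (subset_univ _)
  rw [lintegral_coe_eq_integral _ (hg.integrable_of_hasCompactSupport hcs),
    lintegral_coe_eq_integral _ (hg.integrable_of_hasCompactSupport hcs), h _ hg]

end Aux

/-- If `(ρ, m) ∈ CE(ρ̄₀, ρ̄₁)` with `ρ` nonnegative, then `ρ̄₀` and `ρ̄₁` have the same total
mass, and the temporal marginal of `ρ` is that common mass times the Lebesgue measure
on `[0,1]`. -/
theorem stmt14 {d : ℕ} (hd : 1 ≤ d) (Ω : Set (Euc d)) (hne : Ω.Nonempty)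
    (hcomp : IsCompact Ω) (hconv : Convex ℝ Ω)
    (ρb₀ ρb₁ : Measure ↥Ω) [IsFiniteMeasure ρb₀] [IsFiniteMeasure ρb₁]
    (ρ : Measure (STt d Ω)) [IsFiniteMeasure ρ]
    (m : Fin d → SignedMeasure (STt d Ω))
    (hce : CEeq d Ω ρb₀.toSignedMeasure ρb₁.toSignedMeasure ρ.toSignedMeasure m) :
    ρb₀ Set.univ = ρb₁ Set.univ ∧
      ρ.map Prod.fst = (ρb₀ Set.univ) • (Measure.comap Subtype.val volume :
        Measure ↥(Icc (0:ℝ) 1)) := by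
  -- Key consequence of the continuity equation for time-only test functions.
  have key : ∀ f : ℝ → ℝ, ContDiff ℝ 1 f →
      ∫ p, deriv f (p.1 : ℝ) ∂ρ
        = f 1 * (ρb₁ Set.univ).toReal - f 0 * (ρb₀ Set.univ).toReal := by
    intro f hf
    have h := hce (fun q : ℝ × Euc d => f q.1) (hf.comp contDiff_fst)
    have e1 : (fun p : STt d Ω => fderiv ℝ (fun q : ℝ × Euc d => f q.1) (STemb p) (1, 0))
        = fun p : STt d Ω => deriv f (p.1 : ℝ) := by
      funext p
      rw [fderiv_comp_fst f hf]
      simp [STemb]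
    have e2 : ∀ i : Fin d, (fun p : STt d Ω =>
        fderiv ℝ (fun q : ℝ × Euc d => f q.1) (STemb p) (0, EuclideanSpace.single i 1))
        = fun _ : STt d Ω => (0:ℝ) := by
      intro i
      funext p
      rw [fderiv_comp_fst f hf]
      simp
    rw [e1] at h
    simp only [e2, sInt_zero_fun, Finset.sum_const, smul_zero, add_zero] at h
    rw [sInt_toSigned, sInt_toSigned, sInt_toSigned] at h
    simpa [integral_const, smul_eq_mul, mul_comm, Measure.real] using h
  -- Total masses agree.
  have hmass : ρb₀ Set.univ = ρb₁ Set.univ := by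
    have h1 := key (fun _ => 1) contDiff_const
    simp only [deriv_const', integral_zero] at h1
    have : (ρb₀ Set.univ).toReal = (ρb₁ Set.univ).toReal := by linarith
    exact (ENNReal.toReal_eq_toReal_iff' (measure_ne_top _ _) (measure_ne_top _ _)).mp this
  refine ⟨hmass, ?_⟩
  set ν : Measure ↥(Icc (0:ℝ) 1) := Measure.comap Subtype.val volume with hν
  have hemb : MeasurableEmbedding ((↑) : ↥(Icc (0:ℝ) 1) → ℝ) :=
    MeasurableEmbedding.subtype_coe measurableSet_Icc
  have hmapν : ν.map Subtype.val = volume.restrict (Icc (0:ℝ) 1) :=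
    _root_.map_comap_subtype_coe measurableSet_Icc volume
  haveI : IsFiniteMeasure ν := by
    constructor
    rw [hν, hemb.comap_apply, image_univ, Subtype.range_coe, Real.volume_Icc]
    simp
  haveI : IsFiniteMeasure ((ρb₀ Set.univ) • ν) := by
    constructor
    rw [Measure.smul_apply, smul_eq_mul]
    exact ENNReal.mul_lt_top (measure_lt_top _ _) (measure_lt_top _ _)
  haveI : IsFiniteMeasure (ρ.map Prod.fst) := Measure.isFiniteMeasure_map ρ Prod.fst
  apply ext_real
  intro g hg
  -- extend `g` to a continuous function on `ℝ` and integrate its antiderivative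
  set G : ℝ → ℝ := IccExtend zero_le_one g with hG
  have hGc : Continuous G := hg.Icc_extend'
  obtain ⟨hC1, hD⟩ := antideriv_C1 G hGc
  have hkey := key _ hC1
  rw [hD] at hkey
  have hGg : ∀ p : STt d Ω, G (p.1 : ℝ) = g p.1 := fun p => IccExtend_val zero_le_one g p.1
  have hL : ∫ x, g x ∂(ρ.map Prod.fst) = ∫ p, G (p.1 : ℝ) ∂ρ := by
    rw [integral_map measurable_fst.aemeasurable hg.aestronglyMeasurable]
    exact integral_congr_ae (Filter.Eventually.of_forall fun p => (hGg p).symm)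
  have hIcc : ∫ x, g x ∂ν = ∫ x in (0:ℝ)..(1:ℝ), G x := by
    have h1 : ∫ x, G x ∂(ν.map Subtype.val) = ∫ p, G (p : ℝ) ∂ν := hemb.integral_map _
    rw [hmapν] at h1
    have h2 : ∫ p, G (p : ℝ) ∂ν = ∫ x, g x ∂ν :=
      integral_congr_ae (Filter.Eventually.of_forall fun p => IccExtend_val zero_le_one g p)
    rw [← h2, ← h1, intervalIntegral.integral_of_le zero_le_one,
      ← MeasureTheory.integral_Icc_eq_integral_Ioc]
  have hR : ∫ x, g x ∂((ρb₀ Set.univ) • ν)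
      = (ρb₀ Set.univ).toReal * ∫ x in (0:ℝ)..(1:ℝ), G x := by
    rw [integral_smul_measure, hIcc, smul_eq_mul]
  rw [hL, hR]
  have : ∫ p, G (p.1 : ℝ) ∂ρ
      = (∫ x in (0:ℝ)..(1:ℝ), G x) * (ρb₀ Set.univ).toReal := by
    rw [hkey, ← hmass]
    simp [intervalIntegral.integral_same]
  rw [this, mul_comm]


end
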